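/- Let S be a pre-Hilbert space, L a pre-Hilbert space logic on S, and s a state on (S, L). If A, B, C ∈ L with A ⊆ B ⊆ C, the orthogonal complement of A inside B is {0}, and the orthogonal complement of B inside C is {0}, then s(A) = s(B) = s(C). More precisely: if A ⊆ B with A^{⊥_S} ∩ B = {0} and A, B ∈ L, then s(A) = s(B). -/
import Mathlib


variable {𝕜 S : Type*} [RCLike 𝕜] [NormedAddCommGroup S] [InnerProductSpace 𝕜 S]

/-- A pre-Hilbert space logic on a pre-Hilbert space `S`: a family of orthogonally closed
linear subspaces containing `{0}`, closed under orthocomplementation and under the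
addition of one-dimensional subspaces. -/
def IsPreHilbertLogic (L : Set (Submodule 𝕜 S)) : Prop :=
  (∀ M ∈ L, Mᗮᗮ = M) ∧ (⊥ : Submodule 𝕜 S) ∈ L ∧ (∀ M ∈ L, Mᗮ ∈ L) ∧
    ∀ M ∈ L, ∀ u : S, M ⊔ (𝕜 ∙ u) ∈ L

/-- Let `s` be a state on a pre-Hilbert space logic `(S, L)` (a `[0,1]`-valued map with
`s(S) = 1`, additive on orthogonal pairs whose join lies in `L`). If `A ⊆ B` in `L` and
the orthocomplement of `A` inside `B` is `{0}` (i.e. `Aᗮ ∩ B = {0}`), then `s(A) = s(B)`;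
consequently, for `A ⊆ B ⊆ C` in `L` with `Aᗮ ∩ B = {0}` and `Bᗮ ∩ C = {0}`,
`s(A) = s(B) = s(C)`. -/
theorem state_eq_of_trivial_relative_complement
    (L : Set (Submodule 𝕜 S)) (hL : IsPreHilbertLogic L)
    (s : Submodule 𝕜 S → ℝ)
    (hrange : ∀ M ∈ L, s M ∈ Set.Icc (0 : ℝ) 1)
    (hone : s (⊤ : Submodule 𝕜 S) = 1)
    (hadd : ∀ A B : Submodule 𝕜 S, A ∈ L → B ∈ L → A ≤ Bᗮ → (A ⊔ B)ᗮᗮ ∈ L →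
      s ((A ⊔ B)ᗮᗮ) = s A + s B) :
    (∀ A B : Submodule 𝕜 S, A ∈ L → B ∈ L → A ≤ B → Aᗮ ⊓ B = ⊥ → s A = s B) ∧
      ∀ A B C : Submodule 𝕜 S, A ∈ L → B ∈ L → C ∈ L → A ≤ B → B ≤ C →
        Aᗮ ⊓ B = ⊥ → Bᗮ ⊓ C = ⊥ → s A = s B ∧ s B = s C := by
  obtain ⟨hcc, hbot, hperp, _⟩ := hL
  have htop : (⊤ : Submodule 𝕜 S) ∈ L := by
    have := hperp ⊥ hbot
    rwa [Submodule.bot_orthogonal_eq_top] at this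
  -- key: for A ≤ B in L with Aᗮ ⊓ B = ⊥, s A = s B
  have key : ∀ A B : Submodule 𝕜 S, A ∈ L → B ∈ L → A ≤ B → Aᗮ ⊓ B = ⊥ → s A = s B := by
    intro A B hA hB hAB hinf
    -- s M + s Mᗮ = 1 for M ∈ L
    have hcompl : ∀ M ∈ L, s M + s Mᗮ = 1 := by
      intro M hM
      have hle : M ≤ Mᗮᗮ := Submodule.le_orthogonal_orthogonal M
      have hsup : (M ⊔ Mᗮ)ᗮᗮ = ⊤ := by
        rw [← Submodule.inf_orthogonal, hcc M hM, inf_comm, Submodule.inf_orthogonal_eq_bot,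
          Submodule.bot_orthogonal_eq_top]
      have := hadd M Mᗮ hM (hperp M hM) hle (by rw [hsup]; exact htop)
      rw [hsup, hone] at this
      linarith
    -- 1 = s A + s Bᗮ
    have hsup : (A ⊔ Bᗮ)ᗮᗮ = ⊤ := by
      have : (A ⊔ Bᗮ)ᗮ = ⊥ := by
        rw [← Submodule.inf_orthogonal, hcc B hB]
        exact hinf
      rw [this, Submodule.bot_orthogonal_eq_top]
    have hle : A ≤ Bᗮᗮ := by rw [hcc B hB]; exact hAB
    have h1 := hadd A Bᗮ hA (hperp B hB) hle (by rw [hsup]; exact htop)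
    rw [hsup, hone] at h1
    have h2 := hcompl B hB
    linarith
  refine ⟨key, fun A B C hA hB hC hAB hBC h1 h2 => ⟨key A B hA hB hAB h1, key B C hB hC hBC h2⟩⟩
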